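/- Let G be a group with the property that for any two isomorphic subgroups A, B of cardinality < κ, every isomorphism A → B is induced by conjugation by an element of G, and such that every group of cardinality < κ embeds into G. Then for all groups H ≤ K with |K| < κ, every embedding φ: H → G extends to an embedding of K into G. -/

import Mathlib

open Cardinal

/-- If every group of cardinality `< κ` embeds in `G` and isomorphisms between small
subgroups of `G` are induced by conjugation, then embeddings of `H ≤ K` into `G`
extend to embeddings of `K` into `G`, for `|K| < κ`. -/
theorem stmt10 (κ : Cardinal.{u}) (hκ : ℵ₀ ≤ κ) (G : Type u) [Group G]
    (hembed : ∀ (K : Type u) [Group K], #K < κ → ∃ f : K →* G, Function.Injective f)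
    (hconj : ∀ A B : Subgroup G, #A < κ → #B < κ → ∀ ψ : ↥A ≃* ↥B,
      ∃ t : G, ∀ a : ↥A, (ψ a : G) = t * a * t⁻¹)
    (K : Type u) [Group K] (H : Subgroup K) (hK : #K < κ)
    (φ : ↥H →* G) (hφ : Function.Injective φ) :
    ∃ ψ : K →* G, Function.Injective ψ ∧ ∀ h : ↥H, ψ (h : K) = φ h := by
  obtain ⟨f, hf⟩ := hembed K hK
  set g : ↥H →* G := f.comp H.subtype with hg
  have hginj : Function.Injective g := hf.comp Subtype.coe_injective
  set A : Subgroup G := g.range with hAdef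
  set B : Subgroup G := φ.range with hBdef
  have hHκ : #↥H < κ := lt_of_le_of_lt (Cardinal.mk_le_of_injective Subtype.coe_injective) hK
  have hA : #A < κ :=
    lt_of_le_of_lt (Cardinal.mk_le_of_surjective g.rangeRestrict_surjective) hHκ
  have hB : #B < κ :=
    lt_of_le_of_lt (Cardinal.mk_le_of_surjective φ.rangeRestrict_surjective) hHκ
  set e1 : ↥H ≃* A := MonoidHom.ofInjective hginj
  set e2 : ↥H ≃* B := MonoidHom.ofInjective hφ
  obtain ⟨t, ht⟩ := hconj A B hA hB (e1.symm.trans e2)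
  refine ⟨(MulAut.conj t).toMonoidHom.comp f, ?_, ?_⟩
  · exact (MulAut.conj t).injective.comp hf
  · intro h
    have hmem : g h ∈ A := ⟨h, rfl⟩
    have he1 : e1 h = ⟨g h, hmem⟩ := rfl
    have := ht ⟨g h, hmem⟩
    rw [← he1, MulEquiv.trans_apply, MulEquiv.symm_apply_apply] at this
    have he2 : ((e2 h : ↥B) : G) = φ h := rfl
    rw [he2] at this
    simpa [he1, hg] using this.symm
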